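/- Let p ≥ 3 be a prime and let 3 ≤ r < s be integers with (r-1) dividing s, so that [q+1] = s/(r-1) where q = (s-1)/(r-1). Then min h_p = (1/(p^{[q+1]} - 1)) · ( r - 1 + (p - 1 - 1/(p^{[q+1]} - 1)) · (1 - 1/p^{[q+1](r-1)}) ). -/

import Mathlib

/-- `A(s,r)`: admissible exponent tuples, viewed as functions `ℕ → ℤ` whose relevant
entries are indices `0,…,r-1`: strictly increasing with `a 0 = 0` and `a (r-1) = s-1`. -/
def Admissible (s r : ℕ) (a : ℕ → ℤ) : Prop :=
  a 0 = 0 ∧ a (r - 1) = (s : ℤ) - 1 ∧ ∀ i, i + 1 < r → a i < a (i + 1)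

/-- `h_p(x) = Σ_{k<i≤r} p^{-(x_i - x_k)}` (indices `0,…,r-1`). -/
noncomputable def hp (p r : ℕ) (a : ℕ → ℤ) : ℝ :=
  ∑ k ∈ Finset.range r, ∑ i ∈ Finset.range r,
    if k < i then (p : ℝ) ^ (a k - a i) else 0

open Finset

namespace Stmt3

noncomputable def term (p : ℕ) (d : ℕ → ℕ) (k l : ℕ) : ℝ :=
  ((p:ℝ) ^ (∑ j ∈ Finset.Icc k l, d j))⁻¹

noncomputable def Gv (p n : ℕ) (d : ℕ → ℕ) : ℝ :=
  ∑ k ∈ Finset.range n, ∑ l ∈ Finset.range n, if k ≤ l then term p d k l else 0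

lemma telescope (a : ℕ → ℤ) (k l : ℕ) (hkl : k ≤ l) :
    ∑ j ∈ Icc k l, (a (j+1) - a j) = a (l+1) - a k := by
  induction l with
  | zero =>
    interval_cases k
    simp
  | succ l ih =>
    rcases Nat.lt_or_ge k (l+1) with h | h
    · rw [Finset.sum_Icc_succ_top (by omega), ih (by omega)]
      ring
    · have : k = l + 1 := by omega
      subst this
      simp

lemma gap_sum (a : ℕ → ℤ) (n k l : ℕ) (hkl : k ≤ l) (hl : l < n)
    (ha : ∀ i, i + 1 ≤ n → a i < a (i + 1)) :
    ((∑ j ∈ Icc k l, (a (j+1) - a j).toNat : ℕ) : ℤ) = a (l+1) - a k := by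
  push_cast
  rw [← telescope a k l hkl]
  apply Finset.sum_congr rfl
  intro j hj
  simp only [mem_Icc] at hj
  have := ha j (by omega)
  omega

lemma hp_eq_Gv {p n : ℕ} (hq : 0 < p) (a : ℕ → ℤ)
    (ha : ∀ i, i + 1 ≤ n → a i < a (i + 1)) :
    hp p (n + 1) a = Gv p n (fun j => (a (j + 1) - a j).toNat) := by
  unfold hp Gv
  rw [Finset.sum_range_succ]
  have hlast : (∑ i ∈ Finset.range (n+1), if n < i then (p : ℝ) ^ (a n - a i) else 0) = 0 := by
    apply Finset.sum_eq_zero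
    intro i hi
    simp only [mem_range] at hi
    rw [if_neg (by omega)]
  rw [hlast, add_zero]
  apply Finset.sum_congr rfl
  intro k hk
  simp only [mem_range] at hk
  rw [Finset.sum_range_succ']
  rw [if_neg (by omega), add_zero]
  apply Finset.sum_congr rfl
  intro l hl
  simp only [mem_range] at hl
  by_cases hkl : k ≤ l
  · rw [if_pos (by omega), if_pos hkl]
    unfold term
    have hgap := gap_sum a n k l hkl hl ha
    have hP : (0:ℝ) < (p:ℝ) := by exact_mod_cast hq
    have : a k - a (l+1) = -((∑ j ∈ Icc k l, (a (j+1) - a j).toNat : ℕ) : ℤ) := by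
      rw [hgap]; ring
    rw [this, zpow_neg, zpow_natCast]
  · rw [if_neg (by omega), if_neg hkl]
lemma term_pos {p : ℕ} (hq : 0 < p) (d : ℕ → ℕ) (k l : ℕ) : 0 < term p d k l := by
  have : (0:ℝ) < (p:ℝ) := by exact_mod_cast hq
  exact inv_pos.mpr (pow_pos this _)

lemma geom_aux {x : ℝ} (h0 : 0 ≤ x) (h1 : x < 1) (N : ℕ) :
    ∑ i ∈ range N, x ^ i ≤ 1 / (1 - x) := by
  rw [geom_sum_eq (by intro h; rw [h] at h1; linarith)]
  have h2 : (x ^ N - 1) / (x - 1) = (1 - x ^ N) / (1 - x) := by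
    rw [← neg_div_neg_eq]
    congr 1 <;> ring
  rw [h2, div_le_div_iff₀ (by linarith) (by linarith)]
  have := pow_nonneg h0 N
  nlinarith

lemma sum_two {u v : ℕ} (huv : u ≠ v) (f : ℕ → ℕ) (I : Finset ℕ) (hu : u ∈ I) (hv : v ∈ I) :
    ∑ j ∈ I, f j = f u + f v + ∑ j ∈ (I.erase u).erase v, f j := by
  rw [← Finset.add_sum_erase I f hu, ← Finset.add_sum_erase (I.erase u) f
    (Finset.mem_erase.mpr ⟨(Ne.symm huv), hv⟩)]
  ring

section Exchange
variable {p n u v : ℕ} {d : ℕ → ℕ}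

/-- the modified gap vector -/
def ex (d : ℕ → ℕ) (u v : ℕ) : ℕ → ℕ :=
  fun j => if j = u then d u - 1 else if j = v then d v + 1 else d j

lemma ex_u : ex d u v u = d u - 1 := by simp [ex]
lemma ex_v (huv : u ≠ v) : ex d u v v = d v + 1 := by
  unfold ex; rw [if_neg (Ne.symm huv), if_pos rfl]

lemma ex_both (huv : u ≠ v) (hdu : 2 ≤ d u) {k l : ℕ} (hu : k ≤ u ∧ u ≤ l)
    (hv : k ≤ v ∧ v ≤ l) : ∑ j ∈ Icc k l, ex d u v j = ∑ j ∈ Icc k l, d j := by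
  have hu' : u ∈ Icc k l := mem_Icc.mpr hu
  have hv' : v ∈ Icc k l := mem_Icc.mpr hv
  rw [sum_two huv (ex d u v) _ hu' hv', sum_two huv d _ hu' hv']
  have hrest : ∑ j ∈ ((Icc k l).erase u).erase v, ex d u v j
      = ∑ j ∈ ((Icc k l).erase u).erase v, d j :=
    Finset.sum_congr rfl fun j hj => by
      simp only [mem_erase] at hj
      unfold ex; rw [if_neg hj.2.1, if_neg hj.1]
  rw [hrest, ex_u, ex_v huv]
  omega

lemma ex_uonly (huv : u ≠ v) (hdu : 2 ≤ d u) {k l : ℕ} (hu : k ≤ u ∧ u ≤ l)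
    (hv : ¬(k ≤ v ∧ v ≤ l)) :
    (∑ j ∈ Icc k l, ex d u v j) + 1 = ∑ j ∈ Icc k l, d j := by
  have hu' : u ∈ Icc k l := mem_Icc.mpr hu
  have hv' : v ∉ Icc k l := fun h => hv (mem_Icc.mp h)
  rw [← Finset.add_sum_erase _ (ex d u v) hu', ← Finset.add_sum_erase _ d hu']
  have hrest : ∑ j ∈ (Icc k l).erase u, ex d u v j = ∑ j ∈ (Icc k l).erase u, d j :=
    Finset.sum_congr rfl fun j hj => by
      simp only [mem_erase] at hj
      unfold ex; rw [if_neg hj.1, if_neg (by rintro rfl; exact hv' hj.2)]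
  rw [hrest, ex_u]
  omega

lemma ex_vonly (huv : u ≠ v) {k l : ℕ} (hu : ¬(k ≤ u ∧ u ≤ l)) (hv : k ≤ v ∧ v ≤ l) :
    ∑ j ∈ Icc k l, ex d u v j = (∑ j ∈ Icc k l, d j) + 1 := by
  have hu' : u ∉ Icc k l := fun h => hu (mem_Icc.mp h)
  have hv' : v ∈ Icc k l := mem_Icc.mpr hv
  rw [← Finset.add_sum_erase _ (ex d u v) hv', ← Finset.add_sum_erase _ d hv']
  have hrest : ∑ j ∈ (Icc k l).erase v, ex d u v j = ∑ j ∈ (Icc k l).erase v, d j :=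
    Finset.sum_congr rfl fun j hj => by
      simp only [mem_erase] at hj
      unfold ex; rw [if_neg (by rintro rfl; exact hu' hj.2), if_neg hj.1]
  rw [hrest, ex_v huv]
  omega

lemma ex_none {k l : ℕ} (hu : ¬(k ≤ u ∧ u ≤ l)) (hv : ¬(k ≤ v ∧ v ≤ l)) :
    ∑ j ∈ Icc k l, ex d u v j = ∑ j ∈ Icc k l, d j := by
  have hu' : u ∉ Icc k l := fun h => hu (mem_Icc.mp h)
  have hv' : v ∉ Icc k l := fun h => hv (mem_Icc.mp h)
  exact Finset.sum_congr rfl fun j hj => by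
    unfold ex; rw [if_neg (by rintro rfl; exact hu' hj), if_neg (by rintro rfl; exact hv' hj)]

lemma term_ex (hq : 0 < p) (huv : u ≠ v) (hdu : 2 ≤ d u) (k l : ℕ) :
    term p (ex d u v) k l =
      if (k ≤ u ∧ u ≤ l) ∧ ¬(k ≤ v ∧ v ≤ l) then (p:ℝ) * term p d k l
      else if (k ≤ v ∧ v ≤ l) ∧ ¬(k ≤ u ∧ u ≤ l) then ((p:ℝ))⁻¹ * term p d k l
      else term p d k l := by
  have hP : (0:ℝ) < (p:ℝ) := by exact_mod_cast hq
  unfold term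
  by_cases hu : k ≤ u ∧ u ≤ l <;> by_cases hv : k ≤ v ∧ v ≤ l
  · rw [if_neg (by tauto), if_neg (by tauto), ex_both huv hdu hu hv]
  · rw [if_pos ⟨hu, hv⟩, ← ex_uonly huv hdu hu hv, pow_succ]
    field_simp
    try ring
  · rw [if_neg (by tauto), if_pos ⟨hv, hu⟩, ex_vonly huv hu hv, pow_succ]
    field_simp
    try ring
  · rw [if_neg (by tauto), if_neg (by tauto), ex_none hu hv]


lemma key0_aux {P x : ℝ} (hP3 : 3 ≤ P) (hx0 : 0 < x) (hxP : x * P = 1) (h1x : 0 < 1 - x) :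
    (P - 1) * (1 / (1 - x)) * (1 / (1 - x)) * (x * x) ≤ (P - 1) / P := by
  have hP0 : (0:ℝ) < P := by linarith
  have hP1 : (1:ℝ) < P := by linarith
  have hrw : (P - 1) * (1 / (1 - x)) * (1 / (1 - x)) * (x * x)
      = ((P - 1) * (x * x)) / ((1 - x) * (1 - x)) := by
    field_simp
  have hrw2 : (P - 1) / P = (P - 1) * x := by
    field_simp
    linear_combination (1 - P) * hxP
  rw [hrw, hrw2, div_le_iff₀ (mul_pos h1x h1x)]
  have hx3 : x * 3 ≤ 1 := by nlinarith [mul_le_mul_of_nonneg_left hP3 (le_of_lt hx0)]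
  have h1 : (0:ℝ) ≤ 1 - x * 3 + x * x := by nlinarith [sq_nonneg x]
  nlinarith [mul_nonneg (mul_nonneg (sub_nonneg.mpr (le_of_lt hP1)) (le_of_lt hx0)) h1]

lemma Gv_ex_le (hp3 : 3 ≤ p) (hun : u < n) (hvn : v < n) (huv : u ≠ v)
    (hd1 : ∀ j, j < n → 1 ≤ d j) (hdm : d v + 2 ≤ d u) :
    Gv p n (ex d u v) ≤ Gv p n d := by
  have hq : 0 < p := by omega
  have hP0 : (0:ℝ) < (p:ℝ) := by exact_mod_cast hq
  have hP3 : (3:ℝ) ≤ (p:ℝ) := by exact_mod_cast hp3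
  have hP1 : (1:ℝ) < (p:ℝ) := by linarith
  set P : ℝ := (p:ℝ) with hPdef
  set x : ℝ := P⁻¹ with hxdef
  have hx0 : 0 < x := inv_pos.mpr hP0
  have hxP : x * P = 1 := inv_mul_cancel₀ (ne_of_gt hP0)
  have hx1 : x < 1 := by
    rw [hxdef]
    rw [inv_lt_one_iff₀]
    right; exact hP1
  have hdu2 : 2 ≤ d u := by have := hd1 v hvn; omega
  set A : ℝ := ∑ k ∈ range n, ∑ l ∈ range n,
    (if k ≤ l ∧ (k ≤ u ∧ u ≤ l) ∧ ¬(k ≤ v ∧ v ≤ l) then term p d k l else 0) with hAdef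
  set B : ℝ := ∑ k ∈ range n, ∑ l ∈ range n,
    (if k ≤ l ∧ (k ≤ v ∧ v ≤ l) ∧ ¬(k ≤ u ∧ u ≤ l) then term p d k l else 0) with hBdef
  have hsplit : Gv p n (ex d u v) = Gv p n d + (P - 1) * A - ((P - 1)/P) * B := by
    rw [hAdef, hBdef]
    unfold Gv
    rw [Finset.mul_sum, Finset.mul_sum, ← Finset.sum_add_distrib, ← Finset.sum_sub_distrib]
    apply Finset.sum_congr rfl
    intro k _
    rw [Finset.mul_sum, Finset.mul_sum, ← Finset.sum_add_distrib, ← Finset.sum_sub_distrib]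
    apply Finset.sum_congr rfl
    intro l _
    have hPne : P ≠ 0 := ne_of_gt hP0
    by_cases hkl : k ≤ l
    · rw [term_ex hq huv hdu2 k l, ← hPdef]
      simp only [if_pos hkl]
      by_cases hu : (k ≤ u ∧ u ≤ l) <;> by_cases hv : (k ≤ v ∧ v ≤ l)
      · rw [if_neg (show ¬((k ≤ u ∧ u ≤ l) ∧ ¬(k ≤ v ∧ v ≤ l)) by tauto),
          if_neg (show ¬((k ≤ v ∧ v ≤ l) ∧ ¬(k ≤ u ∧ u ≤ l)) by tauto),
          if_neg (show ¬(k ≤ l ∧ (k ≤ u ∧ u ≤ l) ∧ ¬(k ≤ v ∧ v ≤ l)) by tauto),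
          if_neg (show ¬(k ≤ l ∧ (k ≤ v ∧ v ≤ l) ∧ ¬(k ≤ u ∧ u ≤ l)) by tauto)]
        ring
      · rw [if_pos (show (k ≤ u ∧ u ≤ l) ∧ ¬(k ≤ v ∧ v ≤ l) from ⟨hu, hv⟩),
          if_pos (show k ≤ l ∧ (k ≤ u ∧ u ≤ l) ∧ ¬(k ≤ v ∧ v ≤ l) from ⟨hkl, hu, hv⟩),
          if_neg (show ¬(k ≤ l ∧ (k ≤ v ∧ v ≤ l) ∧ ¬(k ≤ u ∧ u ≤ l)) by tauto)]
        ring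
      · rw [if_neg (show ¬((k ≤ u ∧ u ≤ l) ∧ ¬(k ≤ v ∧ v ≤ l)) by tauto),
          if_pos (show (k ≤ v ∧ v ≤ l) ∧ ¬(k ≤ u ∧ u ≤ l) from ⟨hv, hu⟩),
          if_neg (show ¬(k ≤ l ∧ (k ≤ u ∧ u ≤ l) ∧ ¬(k ≤ v ∧ v ≤ l)) by tauto),
          if_pos (show k ≤ l ∧ (k ≤ v ∧ v ≤ l) ∧ ¬(k ≤ u ∧ u ≤ l) from ⟨hkl, hv, hu⟩)]
        field_simp
        ring
      · rw [if_neg (show ¬((k ≤ u ∧ u ≤ l) ∧ ¬(k ≤ v ∧ v ≤ l)) by tauto),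
          if_neg (show ¬((k ≤ v ∧ v ≤ l) ∧ ¬(k ≤ u ∧ u ≤ l)) by tauto),
          if_neg (show ¬(k ≤ l ∧ (k ≤ u ∧ u ≤ l) ∧ ¬(k ≤ v ∧ v ≤ l)) by tauto),
          if_neg (show ¬(k ≤ l ∧ (k ≤ v ∧ v ≤ l) ∧ ¬(k ≤ u ∧ u ≤ l)) by tauto)]
        ring
    · rw [if_neg hkl, if_neg hkl,
        if_neg (show ¬(k ≤ l ∧ (k ≤ u ∧ u ≤ l) ∧ ¬(k ≤ v ∧ v ≤ l)) by tauto),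
        if_neg (show ¬(k ≤ l ∧ (k ≤ v ∧ v ≤ l) ∧ ¬(k ≤ u ∧ u ≤ l)) by tauto)]
      ring
  -- bound on individual terms through u
  have hTle : ∀ k l : ℕ, l < n → k ≤ u → u ≤ l →
      term p d k l ≤ x ^ (u - k) * x ^ (l - u) * x ^ (d u) := by
    intro k l hl hku hul
    have hu' : u ∈ Icc k l := mem_Icc.mpr ⟨hku, hul⟩
    have hcard : l - k + d u ≤ ∑ j ∈ Icc k l, d j := by
      rw [← Finset.add_sum_erase _ d hu']
      have h1 : ((Icc k l).erase u).card • 1 ≤ ∑ j ∈ (Icc k l).erase u, d j := by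
        apply Finset.card_nsmul_le_sum
        intro j hj
        have hj2 := Finset.mem_of_mem_erase hj
        rw [mem_Icc] at hj2
        exact hd1 j (by omega)
      rw [Finset.card_erase_of_mem hu', Nat.card_Icc, smul_eq_mul, mul_one] at h1
      omega
    have heq : x ^ (u - k) * x ^ (l - u) * x ^ (d u) = (P ^ (l - k + d u))⁻¹ := by
      rw [hxdef, ← pow_add, ← pow_add, inv_pow]
      congr 2
      omega
    rw [heq]
    unfold term
    apply inv_anti₀ (pow_pos hP0 _)
    exact pow_le_pow_right₀ (le_of_lt hP1) hcard
  -- factorized bound for A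
  have hA1 : A ≤ (∑ k ∈ range n, if k ≤ u then x ^ (u - k) else 0)
      * (∑ l ∈ range n, if u ≤ l then x ^ (l - u) else 0) * x ^ (d u) := by
    rw [hAdef, Finset.sum_mul_sum]
    simp only [Finset.sum_mul]
    apply Finset.sum_le_sum
    intro k _
    apply Finset.sum_le_sum
    intro l hl
    rw [mem_range] at hl
    by_cases hc : k ≤ l ∧ (k ≤ u ∧ u ≤ l) ∧ ¬(k ≤ v ∧ v ≤ l)
    · rw [if_pos hc, if_pos hc.2.1.1, if_pos hc.2.1.2]
      exact hTle k l hl hc.2.1.1 hc.2.1.2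
    · rw [if_neg hc]
      positivity
  have hg1 : (∑ k ∈ range n, if k ≤ u then x ^ (u - k) else 0) ≤ 1 / (1 - x) := by
    have e1 : (∑ k ∈ range n, if k ≤ u then x ^ (u - k) else 0)
        = ∑ k ∈ range (u + 1), x ^ (u - k) := by
      rw [← Finset.sum_subset (Finset.range_subset_range.mpr (by omega : u + 1 ≤ n))]
      · apply Finset.sum_congr rfl
        intro k hk
        rw [mem_range] at hk
        rw [if_pos (by omega)]
      · intro k _ hk2
        rw [mem_range] at hk2
        rw [if_neg (by omega)]
    have e2 : ∑ k ∈ range (u + 1), x ^ (u - k) = ∑ j ∈ range (u + 1), x ^ j := by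
      have := Finset.sum_range_reflect (fun j => x ^ j) (u + 1)
      simpa using this
    rw [e1, e2]
    exact geom_aux (le_of_lt hx0) hx1 _
  have hg2 : (∑ l ∈ range n, if u ≤ l then x ^ (l - u) else 0) ≤ 1 / (1 - x) := by
    have e1 : (∑ l ∈ range n, if u ≤ l then x ^ (l - u) else 0)
        = ∑ l ∈ Ico u n, x ^ (l - u) := by
      rw [← Finset.sum_subset (show Ico u n ⊆ range n from fun l hl => by
        rw [mem_Ico] at hl; exact mem_range.mpr hl.2)]
      · apply Finset.sum_congr rfl
        intro l hl
        rw [mem_Ico] at hl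
        rw [if_pos hl.1]
      · intro l hl1 hl2
        rw [mem_range] at hl1
        rw [mem_Ico] at hl2
        rw [if_neg (by omega)]
    have e2 : ∑ l ∈ Ico u n, x ^ (l - u) = ∑ j ∈ range (n - u), x ^ j := by
      rw [Finset.sum_Ico_eq_sum_range]
      apply Finset.sum_congr rfl
      intro j _
      congr 1
      omega
    rw [e1, e2]
    exact geom_aux (le_of_lt hx0) hx1 _
  have hg1nn : (0:ℝ) ≤ ∑ k ∈ range n, if k ≤ u then x ^ (u - k) else 0 := by
    apply Finset.sum_nonneg
    intro k _
    positivity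
  have hg2nn : (0:ℝ) ≤ ∑ l ∈ range n, if u ≤ l then x ^ (l - u) else 0 := by
    apply Finset.sum_nonneg
    intro l _
    positivity
  have h1x : (0:ℝ) < 1 - x := by linarith
  have hcnn : (0:ℝ) ≤ 1 / (1 - x) := div_nonneg zero_le_one (le_of_lt h1x)
  -- lower bound for B
  have hB : x ^ (d v) ≤ B := by
    have hterm : x ^ (d v) = term p d v v := by
      unfold term
      rw [Finset.Icc_self, Finset.sum_singleton, hxdef, inv_pow]
    have hvv : v ≤ v ∧ (v ≤ v ∧ v ≤ v) ∧ ¬(v ≤ u ∧ u ≤ v) :=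
      ⟨le_refl v, ⟨le_refl v, le_refl v⟩, fun h => huv (le_antisymm h.2 h.1)⟩
    have hnn : ∀ k l, (0:ℝ) ≤ if k ≤ l ∧ (k ≤ v ∧ v ≤ l) ∧ ¬(k ≤ u ∧ u ≤ l)
        then term p d k l else 0 := by
      intro k l
      by_cases hc : k ≤ l ∧ (k ≤ v ∧ v ≤ l) ∧ ¬(k ≤ u ∧ u ≤ l)
      · rw [if_pos hc]; exact le_of_lt (term_pos hq d k l)
      · rw [if_neg hc]
    have hinner : x ^ (d v) ≤ ∑ l ∈ range n,
        (if v ≤ l ∧ (v ≤ v ∧ v ≤ l) ∧ ¬(v ≤ u ∧ u ≤ l) then term p d v l else 0) := by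
      refine le_trans ?_ (Finset.single_le_sum (fun i _ => hnn v i) (mem_range.mpr hvn))
      rw [if_pos hvv, hterm]
    rw [hBdef]
    refine le_trans hinner (Finset.single_le_sum (f := fun k => ∑ l ∈ range n,
      (if k ≤ l ∧ (k ≤ v ∧ v ≤ l) ∧ ¬(k ≤ u ∧ u ≤ l) then term p d k l else 0))
      (fun k _ => Finset.sum_nonneg (fun l _ => hnn k l)) (mem_range.mpr hvn))
  -- scalar inequality
  have hkey0 : (P - 1) * (1 / (1 - x)) * (1 / (1 - x)) * (x * x) ≤ (P - 1) / P :=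
    key0_aux hP3 hx0 hxP h1x
  have hxdu : x ^ (d u) ≤ x ^ (d v) * (x * x) := by
    have : x ^ (d v) * (x * x) = x ^ (d v + 2) := by ring
    rw [this]
    exact pow_le_pow_of_le_one (le_of_lt hx0) (le_of_lt hx1) hdm
  have hxdv : (0:ℝ) ≤ x ^ (d v) := by positivity
  have hxdu' : (0:ℝ) ≤ x ^ (d u) := by positivity
  have hPm1 : (0:ℝ) ≤ P - 1 := by linarith
  -- assemble
  have hmain : (P - 1) * A ≤ ((P - 1) / P) * B := by
    have c1 : A ≤ (1 / (1 - x)) * (1 / (1 - x)) * x ^ (d u) := by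
      refine le_trans hA1 ?_
      apply mul_le_mul_of_nonneg_right _ hxdu'
      exact mul_le_mul hg1 hg2 hg2nn hcnn

    have c2 : (P - 1) * A ≤ (P - 1) * ((1 / (1 - x)) * (1 / (1 - x)) * (x ^ (d v) * (x * x))) := by
      apply mul_le_mul_of_nonneg_left _ hPm1
      refine le_trans c1 ?_
      apply mul_le_mul_of_nonneg_left hxdu (mul_nonneg hcnn hcnn)
    have c3 : (P - 1) * ((1 / (1 - x)) * (1 / (1 - x)) * (x ^ (d v) * (x * x)))
        = ((P - 1) * (1 / (1 - x)) * (1 / (1 - x)) * (x * x)) * x ^ (d v) := by ring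
    have c4 : ((P - 1) * (1 / (1 - x)) * (1 / (1 - x)) * (x * x)) * x ^ (d v)
        ≤ ((P - 1) / P) * x ^ (d v) := mul_le_mul_of_nonneg_right hkey0 hxdv
    have c5 : ((P - 1) / P) * x ^ (d v) ≤ ((P - 1) / P) * B := by
      apply mul_le_mul_of_nonneg_left hB (div_nonneg hPm1 (le_of_lt hP0))
    calc (P - 1) * A ≤ _ := c2
    _ = _ := c3
    _ ≤ _ := c4
    _ ≤ _ := c5
  rw [hsplit]
  linarith

end Exchange

def bal (m t : ℕ) : ℕ → ℕ := fun j => if j = t then m - 1 else m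

noncomputable def qe (p m : ℕ) : ℝ := (((p:ℝ)) ^ m)⁻¹

noncomputable def S0 (p m n : ℕ) : ℝ :=
  ∑ k ∈ range n, ∑ l ∈ range n, if k ≤ l then qe p m ^ (l - k + 1) else 0

noncomputable def Cv (p m n t : ℕ) : ℝ :=
  ∑ k ∈ range n, ∑ l ∈ range n, if k ≤ t ∧ t ≤ l then qe p m ^ (l - k + 1) else 0

lemma term_bal {p m : ℕ} (hq : 0 < p) (hm : 1 ≤ m) (t k l : ℕ) (hkl : k ≤ l) :
    term p (bal m t) k l =
      if k ≤ t ∧ t ≤ l then (p:ℝ) * qe p m ^ (l - k + 1) else qe p m ^ (l - k + 1) := by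
  have hP0 : (0:ℝ) < (p:ℝ) := by exact_mod_cast hq
  have hq_pow : qe p m ^ (l - k + 1) = (((p:ℝ)) ^ ((l - k + 1) * m))⁻¹ := by
    rw [qe, inv_pow, ← pow_mul, Nat.mul_comm]
  by_cases hc : k ≤ t ∧ t ≤ l
  · rw [if_pos hc]
    have ht' : t ∈ Icc k l := mem_Icc.mpr hc
    have hsum : ∑ j ∈ Icc k l, bal m t j = (m - 1) + (l - k) * m := by
      rw [← Finset.add_sum_erase _ _ ht']
      have h1 : bal m t t = m - 1 := by simp [bal]
      have h2 : ∑ j ∈ (Icc k l).erase t, bal m t j = (l - k) * m := by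
        have : ∀ j ∈ (Icc k l).erase t, bal m t j = m := by
          intro j hj
          rw [mem_erase] at hj
          simp [bal, hj.1]
        rw [Finset.sum_congr rfl this, Finset.sum_const, Finset.card_erase_of_mem ht',
          Nat.card_Icc, smul_eq_mul]
        congr 1
        omega
      rw [h1, h2]
    unfold term
    rw [hsum, hq_pow]
    obtain ⟨m', rfl⟩ : ∃ m', m = m' + 1 := ⟨m - 1, by omega⟩
    have he : (l - k + 1) * (m' + 1) = (m' + 1 - 1 + (l - k) * (m' + 1)) + 1 := by
      simp only [Nat.add_sub_cancel]
      ring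
    rw [he, pow_succ]
    rw [mul_inv]
    field_simp
  · rw [if_neg hc]
    have hsum : ∑ j ∈ Icc k l, bal m t j = (l - k + 1) * m := by
      have ht' : t ∉ Icc k l := fun h => hc (mem_Icc.mp h)
      have : ∀ j ∈ Icc k l, bal m t j = m := by
        intro j hj
        have hjt : j ≠ t := fun h => ht' (h ▸ hj)
        simp [bal, hjt]
      rw [Finset.sum_congr rfl this, Finset.sum_const, Nat.card_Icc, smul_eq_mul]
      congr 1
      omega
    unfold term
    rw [hsum, hq_pow]

lemma Gv_bal {p m n t : ℕ} (hq : 0 < p) (hm : 1 ≤ m) :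
    Gv p n (bal m t) = S0 p m n + ((p:ℝ) - 1) * Cv p m n t := by
  unfold Gv S0 Cv
  rw [Finset.mul_sum, ← Finset.sum_add_distrib]
  apply Finset.sum_congr rfl
  intro k _
  rw [Finset.mul_sum, ← Finset.sum_add_distrib]
  apply Finset.sum_congr rfl
  intro l _
  by_cases hkl : k ≤ l
  · rw [if_pos hkl]
    rw [if_pos hkl]
    rw [term_bal hq hm t k l hkl]
    by_cases hc : k ≤ t ∧ t ≤ l
    · rw [if_pos hc, if_pos hc]
      ring
    · rw [if_neg hc, if_neg hc]
      ring
  · rw [if_neg hkl, if_neg hkl, if_neg (show ¬(k ≤ t ∧ t ≤ l) from fun h => hkl (le_trans h.1 h.2))]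
    ring

noncomputable def Vval (p m n : ℕ) : ℝ :=
  (1 / ((p:ℝ) ^ m - 1)) * ((n:ℝ) + ((p:ℝ) - 1 - 1 / ((p:ℝ) ^ m - 1)) * (1 - 1 / (p:ℝ) ^ (m * n)))

lemma qe_nonneg {p m : ℕ} : 0 ≤ qe p m := by
  unfold qe
  positivity

lemma qe_le_one {p m : ℕ} (hq : 1 ≤ p) : qe p m ≤ 1 := by
  unfold qe
  have h1 : (1:ℝ) ≤ (p:ℝ) := by exact_mod_cast hq
  have h2 : (1:ℝ) ≤ (p:ℝ) ^ m := one_le_pow₀ h1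
  exact inv_le_one_of_one_le₀ h2

lemma Cv_last {p m n : ℕ} (hn : 1 ≤ n) :
    Cv p m n (n - 1) = ∑ k ∈ range n, qe p m ^ (n - k) := by
  unfold Cv
  apply Finset.sum_congr rfl
  intro k hk
  rw [mem_range] at hk
  rw [Finset.sum_eq_single (n - 1)]
  · rw [if_pos ⟨by omega, le_refl _⟩]
    congr 1
    omega
  · intro l hl hlne
    rw [mem_range] at hl
    rw [if_neg (by omega)]
  · intro h
    exact absurd (mem_range.mpr (by omega)) h

lemma inner_t {p m n t : ℕ} (ht : t < n) :
    (∑ l ∈ range n, if t ≤ t ∧ t ≤ l then qe p m ^ (l - t + 1) else 0)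
      = ∑ j ∈ range (n - t), qe p m ^ (j + 1) := by
  have e1 : (∑ l ∈ range n, if t ≤ t ∧ t ≤ l then qe p m ^ (l - t + 1) else 0)
      = ∑ l ∈ Ico t n, qe p m ^ (l - t + 1) := by
    rw [← Finset.sum_subset (show Ico t n ⊆ range n from fun l hl => by
      rw [mem_Ico] at hl; exact mem_range.mpr hl.2)]
    · apply Finset.sum_congr rfl
      intro l hl
      rw [mem_Ico] at hl
      rw [if_pos ⟨le_refl _, hl.1⟩]
    · intro l hl1 hl2
      rw [mem_range] at hl1
      rw [mem_Ico] at hl2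
      rw [if_neg (by omega)]
  rw [e1, Finset.sum_Ico_eq_sum_range]
  apply Finset.sum_congr rfl
  intro j _
  congr 1
  omega

lemma Cv_split {p m n t : ℕ} (ht : t < n) :
    Cv p m n t = (∑ j ∈ range (n - t), qe p m ^ (j + 1))
      + ∑ k ∈ range t, ∑ l ∈ range n, (if k ≤ t ∧ t ≤ l then qe p m ^ (l - k + 1) else 0) := by
  unfold Cv
  have e1 : (∑ k ∈ range n, ∑ l ∈ range n, if k ≤ t ∧ t ≤ l then qe p m ^ (l - k + 1) else 0)
      = ∑ k ∈ range (t + 1), ∑ l ∈ range n, if k ≤ t ∧ t ≤ l then qe p m ^ (l - k + 1) else 0 := by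
    rw [← Finset.sum_subset (Finset.range_subset_range.mpr (by omega : t + 1 ≤ n))]
    intro k hk1 hk2
    rw [mem_range] at hk1 hk2
    apply Finset.sum_eq_zero
    intro l _
    rw [if_neg (by omega)]
  rw [e1, Finset.sum_range_succ, inner_t ht]
  ring

lemma Cv_mono {p m n t : ℕ} (hq : 1 ≤ p) (ht : t < n) :
    Cv p m n (n - 1) ≤ Cv p m n t := by
  have hq0 := qe_nonneg (p := p) (m := m)
  have hq1 := qe_le_one (p := p) (m := m) hq
  rw [Cv_last (by omega), Cv_split ht]
  have hsplit : ∑ k ∈ range n, qe p m ^ (n - k)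
      = (∑ k ∈ range t, qe p m ^ (n - k)) + ∑ k ∈ Ico t n, qe p m ^ (n - k) := by
    rw [Finset.range_eq_Ico, ← Finset.sum_Ico_consecutive _ (Nat.zero_le t) (le_of_lt ht)]
    rw [Finset.range_eq_Ico]
  rw [hsplit]
  have hB1 : ∑ k ∈ Ico t n, qe p m ^ (n - k) = ∑ j ∈ range (n - t), qe p m ^ (j + 1) := by
    rw [Finset.sum_Ico_eq_sum_range]
    have := Finset.sum_range_reflect (fun j => qe p m ^ (j + 1)) (n - t)
    rw [← this]
    apply Finset.sum_congr rfl
    intro j hj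
    rw [mem_range] at hj
    congr 1
    omega
  rw [hB1, add_comm]
  apply add_le_add le_rfl
  apply Finset.sum_le_sum
  intro k hk
  rw [mem_range] at hk
  have step1 : qe p m ^ (n - k) ≤ qe p m ^ (t - k + 1) :=
    pow_le_pow_of_le_one hq0 hq1 (by omega)
  have hnn : ∀ l, (0:ℝ) ≤ if k ≤ t ∧ t ≤ l then qe p m ^ (l - k + 1) else 0 := by
    intro l
    by_cases hc : k ≤ t ∧ t ≤ l
    · rw [if_pos hc]; positivity
    · rw [if_neg hc]
  have h3 : (if k ≤ t ∧ t ≤ t then qe p m ^ (t - k + 1) else 0)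
      ≤ ∑ l ∈ range n, (if k ≤ t ∧ t ≤ l then qe p m ^ (l - k + 1) else 0) :=
    Finset.single_le_sum (f := fun l => if k ≤ t ∧ t ≤ l then qe p m ^ (l - k + 1) else 0)
      (fun l _ => hnn l) (mem_range.mpr ht)
  rw [if_pos (show k ≤ t ∧ t ≤ t from ⟨by omega, le_refl _⟩)] at h3
  exact le_trans step1 h3

lemma geom_partial {Q : ℝ} (hQ1 : 1 < Q) (N : ℕ) :
    ∑ j ∈ range N, (Q⁻¹) ^ (j + 1) = (1 - (Q⁻¹) ^ N) / (Q - 1) := by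
  have hQ0 : (0:ℝ) < Q := by linarith
  have hQne : Q ≠ 0 := ne_of_gt hQ0
  have hQ1ne : Q - 1 ≠ 0 := by intro h; nlinarith
  induction N with
  | zero => simp
  | succ N ih =>
    rw [Finset.sum_range_succ, ih, pow_succ]
    field_simp
    ring

lemma geom_closed {P Q : ℝ} (hQ1 : 1 < Q) (n : ℕ) :
    ∑ i ∈ range n, ((∑ j ∈ range (i + 1), (Q⁻¹) ^ (j + 1)) + (P - 1) * (Q⁻¹) ^ (i + 1))
      = (1 / (Q - 1)) * ((n:ℝ) + (P - 1 - 1 / (Q - 1)) * (1 - (Q⁻¹) ^ n)) := by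
  have hQ0 : (0:ℝ) < Q := by linarith
  have hQne : Q ≠ 0 := ne_of_gt hQ0
  have hQ1ne : Q - 1 ≠ 0 := by intro h; nlinarith
  induction n with
  | zero => simp
  | succ n ih =>
    rw [Finset.sum_range_succ, ih, geom_partial hQ1, pow_succ]
    field_simp
    push_cast
    ring


lemma S0_reindex {p m n : ℕ} :
    S0 p m n = ∑ i ∈ range n, ∑ j ∈ range (i + 1), qe p m ^ (j + 1) := by
  unfold S0
  have e1 : ∀ k, k < n → (∑ l ∈ range n, if k ≤ l then qe p m ^ (l - k + 1) else 0)
      = ∑ j ∈ range (n - k), qe p m ^ (j + 1) := by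
    intro k hk
    have e2 : (∑ l ∈ range n, if k ≤ l then qe p m ^ (l - k + 1) else 0)
        = ∑ l ∈ Ico k n, qe p m ^ (l - k + 1) := by
      rw [← Finset.sum_subset (show Ico k n ⊆ range n from fun l hl => by
        rw [mem_Ico] at hl; exact mem_range.mpr hl.2)]
      · apply Finset.sum_congr rfl
        intro l hl
        rw [mem_Ico] at hl
        rw [if_pos hl.1]
      · intro l hl1 hl2
        rw [mem_range] at hl1
        rw [mem_Ico] at hl2
        rw [if_neg (by omega)]
    rw [e2, Finset.sum_Ico_eq_sum_range]
    apply Finset.sum_congr rfl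
    intro j _
    congr 1
    omega
  rw [Finset.sum_congr rfl (fun k hk => e1 k (mem_range.mp hk))]
  rw [← Finset.sum_range_reflect (fun i => ∑ j ∈ range (i + 1), qe p m ^ (j + 1)) n]
  apply Finset.sum_congr rfl
  intro k hk
  rw [mem_range] at hk
  have : n - 1 - k + 1 = n - k := by omega
  simp only [this]

lemma Cv_reindex {p m n : ℕ} (hn : 1 ≤ n) :
    Cv p m n (n - 1) = ∑ i ∈ range n, qe p m ^ (i + 1) := by
  rw [Cv_last hn, ← Finset.sum_range_reflect (fun i => qe p m ^ (i + 1)) n]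
  apply Finset.sum_congr rfl
  intro k hk
  rw [mem_range] at hk
  have : n - 1 - k + 1 = n - k := by omega
  simp only [this]

lemma S0C_eq_Vval {p m n : ℕ} (hp2 : 2 ≤ p) (hm : 1 ≤ m) (hn : 1 ≤ n) :
    S0 p m n + ((p:ℝ) - 1) * Cv p m n (n - 1) = Vval p m n := by
  have hP1 : (1:ℝ) < (p:ℝ) := by exact_mod_cast hp2
  have hQ1 : (1:ℝ) < (p:ℝ) ^ m := one_lt_pow₀ hP1 (by omega)
  rw [S0_reindex, Cv_reindex hn, Finset.mul_sum, ← Finset.sum_add_distrib]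
  have hqe : qe p m = ((p:ℝ) ^ m)⁻¹ := rfl
  simp only [hqe]
  rw [geom_closed hQ1 n]
  unfold Vval
  rw [pow_mul]
  simp only [one_div, inv_pow]

lemma Gv_congr {p n : ℕ} {d d' : ℕ → ℕ} (h : ∀ j, j < n → d j = d' j) :
    Gv p n d = Gv p n d' := by
  unfold Gv
  apply Finset.sum_congr rfl
  intro k hk
  apply Finset.sum_congr rfl
  intro l hl
  rw [mem_range] at hk hl
  by_cases hkl : k ≤ l
  · rw [if_pos hkl, if_pos hkl]
    unfold term
    congr 1
    rw [Finset.sum_congr rfl (fun j hj => h j (by rw [mem_Icc] at hj; omega))]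
  · rw [if_neg hkl, if_neg hkl]

lemma sq_aux {a b : ℕ} (hb : 1 ≤ b) (h : b + 2 ≤ a) :
    (a - 1) ^ 2 + (b + 1) ^ 2 < a ^ 2 + b ^ 2 := by
  have ha : 1 ≤ a := by omega
  zify [ha]
  nlinarith [sq_nonneg ((a:ℤ) - b - 2)]


lemma lower_bound {p m n : ℕ} (hp3 : 3 ≤ p) (hm : 2 ≤ m) (hn : 1 ≤ n) :
    ∀ N, ∀ d : ℕ → ℕ, (∀ j, j < n → 1 ≤ d j) → (∑ j ∈ range n, d j = n * m - 1) →
      (∑ j ∈ range n, (d j) ^ 2 ≤ N) → Vval p m n ≤ Gv p n d := by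
  intro N
  induction N using Nat.strong_induction_on with
  | _ N ih =>
    intro d hd1 hdsum hdsq
    by_cases hexist : ∃ u, u < n ∧ ∃ v, v < n ∧ d v + 2 ≤ d u
    · obtain ⟨u, hun, v, hvn, hduv⟩ := hexist
      have huv : u ≠ v := by rintro rfl; omega
      have hd1' : ∀ j, j < n → 1 ≤ ex d u v j := by
        intro j hj
        have h1 := hd1 v hvn
        have h2 := hd1 u hun
        have h3 := hd1 j hj
        unfold ex
        split_ifs <;> omega
      have hu' : u ∈ range n := mem_range.mpr hun
      have hv' : v ∈ range n := mem_range.mpr hvn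
      have hdec : ∀ f : ℕ → ℕ, ∑ j ∈ range n, f j
          = f u + f v + ∑ j ∈ ((range n).erase u).erase v, f j :=
        fun f => sum_two huv f _ hu' hv'
      have hrest : ∑ j ∈ ((range n).erase u).erase v, ex d u v j
          = ∑ j ∈ ((range n).erase u).erase v, d j :=
        Finset.sum_congr rfl (fun j hj => by
          simp only [mem_erase] at hj
          unfold ex
          rw [if_neg hj.2.1, if_neg hj.1])
      have hrestsq : ∑ j ∈ ((range n).erase u).erase v, (ex d u v j) ^ 2
          = ∑ j ∈ ((range n).erase u).erase v, (d j) ^ 2 :=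
        Finset.sum_congr rfl (fun j hj => by
          simp only [mem_erase] at hj
          unfold ex
          rw [if_neg hj.2.1, if_neg hj.1])
      have hsum' : ∑ j ∈ range n, ex d u v j = n * m - 1 := by
        have e1 := hdec (fun j => ex d u v j)
        have e2 := hdec d
        rw [e1, hrest, ex_u, ex_v huv]
        rw [e2] at hdsum
        have := hd1 v hvn
        omega
      have hsq' : ∑ j ∈ range n, (ex d u v j) ^ 2 < N := by
        have e1 := hdec (fun j => ex d u v j ^ 2)
        have e2 := hdec (fun j => d j ^ 2)
        simp only [ex_u, ex_v huv] at e1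
        have e4 := sq_aux (hd1 v hvn) hduv
        rw [e2] at hdsq
        rw [e1, hrestsq]
        linarith [e4]
      have hIH := ih (∑ j ∈ range n, (ex d u v j) ^ 2) hsq' (ex d u v) hd1' hsum' (le_refl _)
      exact le_trans hIH (Gv_ex_le hp3 hun hvn huv hd1 hduv)
    · push_neg at hexist
      have hnm1 : 1 * 1 ≤ n * m := Nat.mul_le_mul hn (by omega)
      have ht : ∃ t, t < n ∧ d t < m := by
        by_contra hc
        push_neg at hc
        have hge : n * m ≤ ∑ j ∈ range n, d j := by
          calc n * m = (range n).card • m := by rw [card_range, smul_eq_mul]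
          _ ≤ ∑ j ∈ range n, d j :=
            Finset.card_nsmul_le_sum _ _ _ (fun j hj => hc j (mem_range.mp hj))
        omega
      obtain ⟨t, htn, htm⟩ := ht
      have ht' : t ∈ range n := mem_range.mpr htn
      have hle : ∀ j, j < n → d j ≤ m := by
        intro j hj
        have := hexist j hj t htn
        omega
      have hsplitt : ∑ j ∈ range n, d j = d t + ∑ j ∈ (range n).erase t, d j :=
        (Finset.add_sum_erase _ d ht').symm
      have hcarde : ((range n).erase t).card = n - 1 := by
        rw [Finset.card_erase_of_mem ht', card_range]
      have h1 : ∑ j ∈ (range n).erase t, d j ≤ (n - 1) * m := by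
        have h1a : ∑ j ∈ (range n).erase t, d j ≤ ((range n).erase t).card • m :=
          Finset.sum_le_card_nsmul _ _ m
            (fun j hj => hle j (mem_range.mp (mem_of_mem_erase hj)))
        rw [hcarde, smul_eq_mul] at h1a
        exact h1a
      have hmuls : (n - 1) * m + m = n * m := by
        have h2 : n - 1 + 1 = n := by omega
        calc (n - 1) * m + m = ((n - 1) + 1) * m := by ring
        _ = n * m := by rw [h2]
      have hdt : d t = m - 1 := by omega
      have hothers : ∀ j, j < n → j ≠ t → d j = m := by
        intro j hj hjt
        by_contra hne
        have hlt : ∑ i ∈ (range n).erase t, d i < ∑ i ∈ (range n).erase t, m := by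
          apply Finset.sum_lt_sum (fun i hi => hle i (mem_range.mp (mem_of_mem_erase hi)))
          exact ⟨j, Finset.mem_erase.mpr ⟨hjt, mem_range.mpr hj⟩, by
            have := hle j hj; omega⟩
        rw [Finset.sum_const, hcarde, smul_eq_mul] at hlt
        omega
      have hbal : ∀ j, j < n → d j = bal m t j := by
        intro j hj
        unfold bal
        split_ifs with h
        · rw [h]; exact hdt
        · exact hothers j hj h
      rw [Gv_congr hbal, Gv_bal (show 0 < p by omega) (by omega)]
      have hCmono := Cv_mono (p := p) (m := m) (by omega) htn
      have hS0C := S0C_eq_Vval (p := p) (m := m) (n := n) (by omega) (by omega) hn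
      have hP1 : (1:ℝ) ≤ (p:ℝ) := by exact_mod_cast (by omega : 1 ≤ p)
      have hmul := mul_le_mul_of_nonneg_left hCmono (by linarith : (0:ℝ) ≤ (p:ℝ) - 1)
      linarith

def aStar (m n : ℕ) : ℕ → ℤ := fun i => i * m - if n ≤ i then 1 else 0

end Stmt3

/-- If `(r-1) ∣ s` and `m = s/(r-1) = [q+1]`, then
`min h_p = (1/(p^m-1)) (r - 1 + (p - 1 - 1/(p^m-1))(1 - 1/p^{m(r-1)}))`,
expressed as: this value is the least element of the set of values of `h_p` on `A(s,r)`. -/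
theorem stmt3 (p s r : ℕ) (hpp : p.Prime) (hp3 : 3 ≤ p) (hr : 3 ≤ r) (hrs : r < s)
    (hdvd : (r - 1) ∣ s) :
    IsLeast {x : ℝ | ∃ a : ℕ → ℤ, Admissible s r a ∧ hp p r a = x}
      ((1 / ((p : ℝ) ^ (s / (r - 1)) - 1)) *
        ((r : ℝ) - 1 + ((p : ℝ) - 1 - 1 / ((p : ℝ) ^ (s / (r - 1)) - 1)) *
          (1 - 1 / (p : ℝ) ^ ((s / (r - 1)) * (r - 1))))) := by
  have hq : 0 < p := by omega
  set n := r - 1 with hndef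
  set m := s / (r - 1) with hmdef
  have hn2 : 2 ≤ n := by omega
  have hrn : r = n + 1 := by omega
  obtain ⟨c, hc⟩ := hdvd
  have hmc : m = c := by
    rw [hmdef, hc]
    exact Nat.mul_div_cancel_left c (by omega)
  have hs : s = n * m := by rw [hmc, hc]
  have hm2 : 2 ≤ m := by
    by_contra h
    push_neg at h
    interval_cases m <;> omega
  have hval : ((1 / ((p : ℝ) ^ m - 1)) *
      ((r : ℝ) - 1 + ((p : ℝ) - 1 - 1 / ((p : ℝ) ^ m - 1)) *
        (1 - 1 / (p : ℝ) ^ (m * n)))) = Stmt3.Vval p m n := by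
    unfold Stmt3.Vval
    have : ((n:ℕ) : ℝ) = (r : ℝ) - 1 := by
      rw [hndef]
      push_cast [Nat.cast_sub (by omega : 1 ≤ r)]
      ring
    rw [this]
  rw [hval]
  constructor
  · -- membership: the balanced tuple
    refine ⟨Stmt3.aStar m n, ?_, ?_⟩
    · refine ⟨?_, ?_, ?_⟩
      · unfold Stmt3.aStar
        rw [if_neg (by omega)]
        simp
      · unfold Stmt3.aStar
        rw [if_pos (by omega : n ≤ r - 1)]
        have : r - 1 = n := rfl
        rw [this, hs]
        push_cast
        ring
      · intro i hi
        unfold Stmt3.aStar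
        rw [if_neg (show ¬ n ≤ i by omega)]
        have hmul : ((i:ℤ) + 1) * m = i * m + m := by ring
        by_cases hin : n ≤ i + 1
        · rw [if_pos hin]
          push_cast
          rw [hmul]
          have hm2' : (2:ℤ) ≤ (m:ℤ) := by exact_mod_cast hm2
          omega
        · rw [if_neg hin]
          push_cast
          rw [hmul]
          have hm2' : (2:ℤ) ≤ (m:ℤ) := by exact_mod_cast hm2
          omega
    · -- value computation
      have hmono : ∀ i, i + 1 ≤ n → Stmt3.aStar m n i < Stmt3.aStar m n (i + 1) := by
        intro i hi
        unfold Stmt3.aStar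
        rw [if_neg (show ¬ n ≤ i by omega)]
        have hmul : ((i:ℤ) + 1) * m = i * m + m := by ring
        have hm2' : (2:ℤ) ≤ (m:ℤ) := by exact_mod_cast hm2
        by_cases hin : n ≤ i + 1
        · rw [if_pos hin]; push_cast; rw [hmul]; omega
        · rw [if_neg hin]; push_cast; rw [hmul]; omega
      rw [hrn, Stmt3.hp_eq_Gv hq _ hmono]
      have hgap : ∀ j, j < n →
          (Stmt3.aStar m n (j + 1) - Stmt3.aStar m n j).toNat = Stmt3.bal m (n - 1) j := by
        intro j hj
        unfold Stmt3.aStar Stmt3.bal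
        rw [if_neg (show ¬ n ≤ j by omega)]
        have hmul : ((j:ℤ) + 1) * m = j * m + m := by ring
        have hm2' : (2:ℤ) ≤ (m:ℤ) := by exact_mod_cast hm2
        by_cases hjn : j = n - 1
        · rw [if_pos (show n ≤ j + 1 by omega), if_pos hjn]
          push_cast
          rw [hmul]
          omega
        · rw [if_neg (show ¬ n ≤ j + 1 by omega), if_neg hjn]
          push_cast
          rw [hmul]
          omega
      rw [Stmt3.Gv_congr hgap, Stmt3.Gv_bal hq (by omega),
        Stmt3.S0C_eq_Vval (by omega) (by omega) (by omega)]
  · -- lower bound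
    rintro x ⟨a, ⟨ha0, han, hmono⟩, rfl⟩
    have hmono' : ∀ i, i + 1 ≤ n → a i < a (i + 1) := fun i hi => hmono i (by omega)
    rw [hrn, Stmt3.hp_eq_Gv hq a hmono']
    set d : ℕ → ℕ := fun j => (a (j + 1) - a j).toNat with hddef
    have hd1 : ∀ j, j < n → 1 ≤ d j := by
      intro j hj
      have := hmono' j (by omega)
      simp only [hddef]
      omega
    have hsum : ∑ j ∈ Finset.range n, d j = n * m - 1 := by
      have hIcc : Finset.Icc 0 (n - 1) = Finset.range n := by
        ext x
        simp only [Finset.mem_Icc, Finset.mem_range]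
        omega
      have hg := Stmt3.gap_sum a n 0 (n - 1) (by omega) (by omega) hmono'
      rw [hIcc] at hg
      have hl : n - 1 + 1 = n := by omega
      rw [hl, ha0, sub_zero] at hg
      have han' : a n = (s:ℤ) - 1 := by
        have : r - 1 = n := rfl
        rw [← this]; exact han
      rw [han'] at hg
      have hs' : (s:ℤ) = (n:ℤ) * m := by exact_mod_cast hs
      have hnm1 : 1 * 1 ≤ n * m := Nat.mul_le_mul (by omega) (by omega)
      have hg2 : ((∑ j ∈ Finset.range n, d j : ℕ) : ℤ) = ((n * m : ℕ) : ℤ) - 1 := by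
        rw [hg, hs']
        push_cast
        ring
      omega
    exact Stmt3.lower_bound hp3 hm2 (by omega) (∑ j ∈ Finset.range n, (d j) ^ 2)
      d hd1 hsum (le_refl _)
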